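/- Let 0 < s₀ < s₁, let f : [s₀, s₁] → ℝ be continuous with f(s) > f(s₀) > 0 for s ∈ (s₀, s₁], and let g : (0, s₁] → ℝ be continuous and nonnegative. Assume the improper integrals ∫_{s₀}^{s₁} g(s)·f(s)/√(f(s)² − f(s₀)²) ds, ∫_{s₀}^{s₁} (g(s)/f(s))·f(s₀)/√(f(s)² − f(s₀)²) ds, and ∫_{0}^{s₀} g(s) ds converge. Then 2∫_{s₀}^{s₁} g(s)·f(s)/√(f(s)² − f(s₀)²) ds − 2∫_{0}^{s₁} g(s) ds = f(s₀)·L(s₀) + 2∫_{s₀}^{s₁} (g(s)/f(s))·( √(f(s)² − f(s₀)²) − f(s) ) ds − 2∫_{0}^{s₀} g(s) ds, where L(s₀) = 2∫_{s₀}^{s₁} (g(s)/f(s))·f(s₀)/√(f(s)² − f(s₀)²) ds. -/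

import Mathlib

open MeasureTheory Real Set

/-- Decomposition of the renormalized on-shell Nambu–Goto energy: with the quark-mass
subtraction `2∫_0^{s₁} g`, the energy `2∫_{s₀}^{s₁} g·f/√(f² − f(s₀)²) − 2∫_0^{s₁} g`
equals `f(s₀)·L(s₀) + 2∫_{s₀}^{s₁} (g/f)·(√(f² − f(s₀)²) − f) − 2∫_0^{s₀} g`, where
`L(s₀) = 2∫_{s₀}^{s₁} (g/f)·f(s₀)/√(f² − f(s₀)²)`. -/
theorem nambu_goto_energy_decomposition (s₀ s₁ : ℝ) (h0 : 0 < s₀) (h01 : s₀ < s₁)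
    (f g : ℝ → ℝ)
    (hf : ContinuousOn f (Icc s₀ s₁)) (hf0 : 0 < f s₀)
    (hfgt : ∀ s ∈ Ioc s₀ s₁, f s₀ < f s)
    (hg : ContinuousOn g (Ioc 0 s₁)) (hgnn : ∀ s ∈ Ioc 0 s₁, 0 ≤ g s)
    (h1 : IntegrableOn (fun s => g s * f s / Real.sqrt ((f s) ^ 2 - (f s₀) ^ 2))
      (Ioc s₀ s₁))
    (h2 : IntegrableOn (fun s => (g s / f s) * f s₀ / Real.sqrt ((f s) ^ 2 - (f s₀) ^ 2))
      (Ioc s₀ s₁))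
    (h3 : IntegrableOn g (Ioc 0 s₀)) :
    2 * (∫ s in Ioc s₀ s₁, g s * f s / Real.sqrt ((f s) ^ 2 - (f s₀) ^ 2))
        - 2 * ∫ s in Ioc 0 s₁, g s =
      f s₀ * (2 * ∫ s in Ioc s₀ s₁,
          (g s / f s) * f s₀ / Real.sqrt ((f s) ^ 2 - (f s₀) ^ 2))
        + 2 * (∫ s in Ioc s₀ s₁,
          (g s / f s) * (Real.sqrt ((f s) ^ 2 - (f s₀) ^ 2) - f s))
        - 2 * ∫ s in Ioc 0 s₀, g s := by
  have hsub : Icc s₀ s₁ ⊆ Ioc 0 s₁ := fun x hx => ⟨lt_of_lt_of_le h0 hx.1, hx.2⟩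
  have hgI : IntegrableOn g (Ioc s₀ s₁) :=
    ((hg.mono hsub).integrableOn_Icc).mono_set Ioc_subset_Icc_self
  -- pointwise identity on Ioc s₀ s₁
  have key : ∀ s ∈ Ioc s₀ s₁,
      g s * f s / Real.sqrt ((f s) ^ 2 - (f s₀) ^ 2) =
        f s₀ * ((g s / f s) * f s₀ / Real.sqrt ((f s) ^ 2 - (f s₀) ^ 2)) +
          ((g s / f s) * (Real.sqrt ((f s) ^ 2 - (f s₀) ^ 2) - f s) + g s) := by
    intro s hs
    have hfpos : 0 < f s := hf0.trans (hfgt s hs)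
    have hD : 0 < (f s) ^ 2 - (f s₀) ^ 2 := by nlinarith [hfgt s hs, hf0]
    have hr : 0 < Real.sqrt ((f s) ^ 2 - (f s₀) ^ 2) := Real.sqrt_pos.2 hD
    have hr2 : Real.sqrt ((f s) ^ 2 - (f s₀) ^ 2) ^ 2 = (f s) ^ 2 - (f s₀) ^ 2 :=
      Real.sq_sqrt hD.le
    field_simp
    linear_combination (-g s) * hr2
  -- integrability of the middle term
  have hAI : IntegrableOn
      (fun s => f s₀ * ((g s / f s) * f s₀ / Real.sqrt ((f s) ^ 2 - (f s₀) ^ 2)))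
      (Ioc s₀ s₁) := h2.const_mul (f s₀)
  have hB : IntegrableOn
      (fun s => (g s / f s) * (Real.sqrt ((f s) ^ 2 - (f s₀) ^ 2) - f s)) (Ioc s₀ s₁) := by
    have h4 : IntegrableOn
        (fun s => g s * f s / Real.sqrt ((f s) ^ 2 - (f s₀) ^ 2) -
          (f s₀ * ((g s / f s) * f s₀ / Real.sqrt ((f s) ^ 2 - (f s₀) ^ 2)) + g s))
        (Ioc s₀ s₁) := h1.sub (hAI.add hgI)
    refine h4.congr_fun (fun s hs => ?_) measurableSet_Ioc
    linarith [key s hs]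
  have hBg : IntegrableOn
      (fun s => (g s / f s) * (Real.sqrt ((f s) ^ 2 - (f s₀) ^ 2) - f s) + g s)
      (Ioc s₀ s₁) := hB.add hgI
  -- split ∫_0^{s₁} g
  have hsplit : (∫ s in Ioc 0 s₁, g s) = (∫ s in Ioc 0 s₀, g s) + ∫ s in Ioc s₀ s₁, g s := by
    rw [← Set.Ioc_union_Ioc_eq_Ioc h0.le h01.le,
      MeasureTheory.setIntegral_union (Set.Ioc_disjoint_Ioc_of_le le_rfl) measurableSet_Ioc h3 hgI]
  -- rewrite the main integral
  have hmain : (∫ s in Ioc s₀ s₁, g s * f s / Real.sqrt ((f s) ^ 2 - (f s₀) ^ 2)) =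
      f s₀ * (∫ s in Ioc s₀ s₁, (g s / f s) * f s₀ / Real.sqrt ((f s) ^ 2 - (f s₀) ^ 2)) +
        ((∫ s in Ioc s₀ s₁, (g s / f s) * (Real.sqrt ((f s) ^ 2 - (f s₀) ^ 2) - f s)) +
          ∫ s in Ioc s₀ s₁, g s) := by
    rw [MeasureTheory.setIntegral_congr_fun measurableSet_Ioc key]
    rw [MeasureTheory.integral_add hAI hBg,
      MeasureTheory.integral_add hB hgI, MeasureTheory.integral_const_mul]
  rw [hsplit]
  linarith [hmain]
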